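/- arXiv:2502.18223 — 3 statements merged into one kernel-verified Lean document; each statement's English description precedes it below -/
import Mathlib

section
/- For all κ ≥ 0, the function d(κ) = sqrt(κ I₁(κ)/I₀(κ) − log I₀(κ)) is well-defined, i.e., κ I₁(κ)/I₀(κ) − log I₀(κ) ≥ 0, with equality iff κ = 0. -/
open Real MeasureTheory

noncomputable def besselI0 (κ : ℝ) : ℝ :=
  (1 / (2 * Real.pi)) * ∫ t in (0:ℝ)..(2 * Real.pi), Real.exp (κ * Real.cos t)

noncomputable def besselI1 (κ : ℝ) : ℝ :=
  (1 / (2 * Real.pi)) * ∫ t in (0:ℝ)..(2 * Real.pi), Real.cos t * Real.exp (κ * Real.cos t)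

/-- Tangent-line inequality: for `a, c > 0`, `a * log a ≥ a * log c + a - c`. -/
lemma tangent_ineq {a c : ℝ} (ha : 0 < a) (hc : 0 < c) :
    0 ≤ a * Real.log a - a * (Real.log c + 1) + c := by
  have h := Real.log_le_sub_one_of_pos (div_pos hc ha)
  rw [Real.log_div hc.ne' ha.ne'] at h
  have h2 : a * (Real.log c - Real.log a) ≤ a * (c / a - 1) := by
    exact mul_le_mul_of_nonneg_left h ha.le
  have h3 : a * (c / a - 1) = c - a := by field_simp
  nlinarith

lemma tangent_strict {a c : ℝ} (ha : 0 < a) (hc : 0 < c) (hne : a ≠ c) :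
    0 < a * Real.log a - a * (Real.log c + 1) + c := by
  have hne' : c / a ≠ 1 := by
    intro h
    apply hne
    field_simp at h
    linarith
  have h := Real.log_lt_sub_one_of_pos (div_pos hc ha) hne'
  rw [Real.log_div hc.ne' ha.ne'] at h
  have h2 : a * (Real.log c - Real.log a) < a * (c / a - 1) := by
    exact mul_lt_mul_of_pos_left h ha
  have h3 : a * (c / a - 1) = c - a := by field_simp
  nlinarith

set_option maxHeartbeats 1000000 in
theorem vonMises_distance_wellDefined (κ : ℝ) (hκ : 0 ≤ κ) :
    0 ≤ κ * besselI1 κ / besselI0 κ - Real.log (besselI0 κ) ∧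
      (κ * besselI1 κ / besselI0 κ - Real.log (besselI0 κ) = 0 ↔ κ = 0) := by
  have hπ : (0:ℝ) < 2 * Real.pi := by positivity
  set c := besselI0 κ with hc_def
  -- positivity of I₀
  have hScont : Continuous fun t => Real.exp (κ * Real.cos t) := by continuity
  have hCcont : Continuous fun t => Real.cos t * Real.exp (κ * Real.cos t) := by continuity
  have hSpos : 0 < ∫ t in (0:ℝ)..(2 * Real.pi), Real.exp (κ * Real.cos t) := by
    apply intervalIntegral.integral_pos hπ (hScont.continuousOn)
    · intro x _; positivity
    · exact ⟨0, by constructor <;> [rfl; positivity], by positivity⟩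
  have hcpos : 0 < c := by
    rw [hc_def, besselI0]
    exact mul_pos (by positivity) hSpos
  -- the nonnegative integrand
  set h : ℝ → ℝ :=
    fun t => κ * (Real.cos t * Real.exp (κ * Real.cos t))
      - (Real.log c + 1) * Real.exp (κ * Real.cos t) + c with hh_def
  have hh_eq : ∀ t, h t = Real.exp (κ * Real.cos t) * Real.log (Real.exp (κ * Real.cos t))
      - Real.exp (κ * Real.cos t) * (Real.log c + 1) + c := by
    intro t
    rw [Real.log_exp]
    ring
  have hh_nonneg : ∀ t, 0 ≤ h t := by
    intro t
    rw [hh_eq]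
    exact tangent_ineq (Real.exp_pos _) hcpos
  have hhcont : Continuous h := by rw [hh_def]; continuity
  -- compute the integral of h
  have hint1 : IntervalIntegrable (fun t => κ * (Real.cos t * Real.exp (κ * Real.cos t)))
      volume 0 (2 * Real.pi) := ((continuous_const.mul hCcont)).intervalIntegrable _ _
  have hint2 : IntervalIntegrable (fun t => (Real.log c + 1) * Real.exp (κ * Real.cos t))
      volume 0 (2 * Real.pi) := ((continuous_const.mul hScont)).intervalIntegrable _ _
  have e1 : ∫ t in (0:ℝ)..(2 * Real.pi), Real.cos t * Real.exp (κ * Real.cos t)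
      = 2 * Real.pi * besselI1 κ := by
    rw [besselI1]; field_simp
    simp only [mul_comm (Real.cos _) κ]
  have e2 : (∫ t in (0:ℝ)..(2 * Real.pi), Real.exp (κ * Real.cos t)) = 2 * Real.pi * c := by
    rw [hc_def, besselI0]; field_simp
  have hIh : ∫ t in (0:ℝ)..(2 * Real.pi), h t
      = 2 * Real.pi * (κ * besselI1 κ - c * Real.log c) := by
    have step : ∫ t in (0:ℝ)..(2 * Real.pi), h t
        = (∫ t in (0:ℝ)..(2 * Real.pi), κ * (Real.cos t * Real.exp (κ * Real.cos t)))
          - (∫ t in (0:ℝ)..(2 * Real.pi), (Real.log c + 1) * Real.exp (κ * Real.cos t))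
          + (∫ t in (0:ℝ)..(2 * Real.pi), (c : ℝ)) := by
      rw [← intervalIntegral.integral_sub hint1 hint2,
        ← intervalIntegral.integral_add (hint1.sub hint2) intervalIntegrable_const]
    rw [step, intervalIntegral.integral_const_mul, intervalIntegral.integral_const_mul,
      intervalIntegral.integral_const, e1, e2, smul_eq_mul]
    ring
  -- key identity
  have hkey : κ * besselI1 κ / c - Real.log c
      = (∫ t in (0:ℝ)..(2 * Real.pi), h t) / (2 * Real.pi * c) := by
    rw [hIh]
    field_simp
  have hInonneg : 0 ≤ ∫ t in (0:ℝ)..(2 * Real.pi), h t :=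
    intervalIntegral.integral_nonneg hπ.le (fun u _ => hh_nonneg u)
  constructor
  · rw [hkey]
    positivity
  · constructor
    · intro h0
      by_contra hκ0
      have hκpos : 0 < κ := lt_of_le_of_ne hκ (Ne.symm hκ0)
      -- strict positivity of the integral
      have hexists : ∃ x ∈ Set.Icc (0:ℝ) (2 * Real.pi), 0 < h x := by
        by_cases hce : Real.exp κ = c
        · refine ⟨Real.pi, ⟨Real.pi_pos.le, by linarith [Real.pi_pos]⟩, ?_⟩
          rw [hh_eq]
          apply tangent_strict (Real.exp_pos _) hcpos
          rw [Real.cos_pi, ← hce]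
          simp only [mul_neg_one, mul_one]
          intro habs
          have := Real.exp_lt_exp.mpr (show -κ < κ by linarith)
          rw [habs] at this
          exact lt_irrefl _ this
        · refine ⟨0, ⟨le_refl _, hπ.le⟩, ?_⟩
          rw [hh_eq]
          apply tangent_strict (Real.exp_pos _) hcpos
          rw [Real.cos_zero, mul_one]
          exact hce
      have hIpos : 0 < ∫ t in (0:ℝ)..(2 * Real.pi), h t :=
        intervalIntegral.integral_pos hπ hhcont.continuousOn
          (fun x _ => hh_nonneg x) hexists
      rw [hkey] at h0
      have : 0 < (∫ t in (0:ℝ)..(2 * Real.pi), h t) / (2 * Real.pi * c) := by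
        positivity
      linarith [h0 ▸ this]
    · intro h0
      subst h0
      have hc1 : c = 1 := by
        rw [hc_def, besselI0]
        simp only [zero_mul, Real.exp_zero]
        rw [intervalIntegral.integral_const]
        field_simp
        simp
      rw [hc1]
      simp
end

section
/- The function κ ↦ κ I₁(κ)/I₀(κ) − log I₀(κ) is strictly increasing on (0, ∞), with derivative κ · d/dκ (I₁(κ)/I₀(κ)) = κ[(I₀(κ) + I₂(κ))/(2 I₀(κ)) − I₁(κ)²/I₀(κ)²]. -/
open Real MeasureTheory intervalIntegral Set Metric

/-- Differentiation under the integral sign for `∫ g t * exp (x cos t)` with `|g| ≤ 1`. -/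
lemma hasDerivAt_besselInt (g : ℝ → ℝ) (hg : Continuous g) (hb : ∀ t, |g t| ≤ 1) (κ : ℝ) :
    HasDerivAt (fun x : ℝ => ∫ t in (0:ℝ)..(2*Real.pi), g t * Real.exp (x * Real.cos t))
      (∫ t in (0:ℝ)..(2*Real.pi), g t * Real.cos t * Real.exp (κ * Real.cos t)) κ := by
  have h := intervalIntegral.hasDerivAt_integral_of_dominated_loc_of_deriv_le
    (F := fun x t => g t * Real.exp (x * Real.cos t))
    (F' := fun x t => g t * Real.cos t * Real.exp (x * Real.cos t))
    (x₀ := κ) (a := 0) (b := 2*Real.pi) (μ := volume)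
    (bound := fun _ => Real.exp (|κ| + 1)) (s := ball κ 1) (ball_mem_nhds κ one_pos)
    ?_ ?_ ?_ ?_ ?_ ?_
  · exact h.2
  · filter_upwards with x
    exact (Continuous.aestronglyMeasurable (by continuity))
  · exact (Continuous.intervalIntegrable (by continuity) _ _)
  · exact (Continuous.aestronglyMeasurable (by continuity))
  · filter_upwards with t _ x hx
    have h1 : |Real.cos t| ≤ 1 := abs_cos_le_one t
    have h2 : x * Real.cos t ≤ |κ| + 1 := by
      calc x * Real.cos t ≤ |x * Real.cos t| := le_abs_self _
        _ = |x| * |Real.cos t| := abs_mul _ _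
        _ ≤ (|κ| + 1) * 1 := by
            apply mul_le_mul _ h1 (abs_nonneg _) (by positivity)
            have := mem_ball_iff_norm.mp hx
            calc |x| = |κ + (x - κ)| := by ring_nf
              _ ≤ |κ| + |x - κ| := abs_add_le _ _
              _ ≤ |κ| + 1 := by
                  simp only [Real.norm_eq_abs] at this
                  linarith [this.le]
        _ = |κ| + 1 := mul_one _
    calc ‖g t * Real.cos t * Real.exp (x * Real.cos t)‖
        = |g t| * |Real.cos t| * Real.exp (x * Real.cos t) := by
          rw [norm_mul, norm_mul, Real.norm_eq_abs, Real.norm_eq_abs, Real.norm_eq_abs, abs_exp]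
      _ ≤ 1 * 1 * Real.exp (|κ| + 1) := by
          apply mul_le_mul (mul_le_mul (hb t) h1 (abs_nonneg _) zero_le_one)
            (Real.exp_le_exp.mpr h2) (Real.exp_pos _).le (by norm_num)
      _ = Real.exp (|κ| + 1) := by ring
  · exact (Continuous.intervalIntegrable (by continuity) _ _)
  · filter_upwards with t _ x _
    have := (((hasDerivAt_id x).mul_const (Real.cos t)).exp).const_mul (g t)
    simpa [mul_comm, mul_assoc, mul_left_comm] using this

noncomputable def besselI2 (κ : ℝ) : ℝ :=
  (1 / (2 * Real.pi)) * ∫ t in (0:ℝ)..(2 * Real.pi), Real.cos (2 * t) * Real.exp (κ * Real.cos t)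

lemma besselI0_pos (κ : ℝ) : 0 < besselI0 κ := by
  apply mul_pos (by positivity)
  exact intervalIntegral_pos_of_pos (Continuous.intervalIntegrable (by continuity) _ _)
    (fun t => Real.exp_pos _) (by positivity)

lemma hasDerivAt_besselI0 (κ : ℝ) : HasDerivAt besselI0 (besselI1 κ) κ := by
  have h := (hasDerivAt_besselInt (fun _ => 1) continuous_const
    (fun t => by norm_num) κ).const_mul (1 / (2 * Real.pi))
  simp only [one_mul] at h
  exact h

lemma hasDerivAt_besselI1 (κ : ℝ) :
    HasDerivAt besselI1 ((besselI0 κ + besselI2 κ) / 2) κ := by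
  have h := (hasDerivAt_besselInt Real.cos Real.continuous_cos abs_cos_le_one κ).const_mul
    (1 / (2 * Real.pi))
  have key : (1 / (2 * Real.pi)) * ∫ t in (0:ℝ)..(2*Real.pi),
      Real.cos t * Real.cos t * Real.exp (κ * Real.cos t)
      = (besselI0 κ + besselI2 κ) / 2 := by
    have h1 : ∀ t : ℝ, Real.cos t * Real.cos t * Real.exp (κ * Real.cos t)
        = (1/2) * Real.exp (κ * Real.cos t)
          + (1/2) * (Real.cos (2*t) * Real.exp (κ * Real.cos t)) := by
      intro t
      have := Real.cos_sq t
      have h2 : Real.cos t * Real.cos t = 1/2 + Real.cos (2*t)/2 := by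
        rw [← pow_two]; simpa using this
      rw [h2]; ring
    rw [intervalIntegral.integral_congr (fun t _ => h1 t),
      intervalIntegral.integral_add
        ((Continuous.intervalIntegrable (by continuity) _ _))
        ((Continuous.intervalIntegrable (by continuity) _ _)),
      intervalIntegral.integral_const_mul, intervalIntegral.integral_const_mul]
    unfold besselI0 besselI2
    ring
  rw [key] at h
  exact h

lemma besselC (κ : ℝ) :
    (1 / (2 * Real.pi)) * (∫ t in (0:ℝ)..(2*Real.pi),
      Real.cos t * Real.cos t * Real.exp (κ * Real.cos t))
      = (besselI0 κ + besselI2 κ) / 2 := by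
  have h1 : ∀ t : ℝ, Real.cos t * Real.cos t * Real.exp (κ * Real.cos t)
      = (1/2) * Real.exp (κ * Real.cos t)
        + (1/2) * (Real.cos (2*t) * Real.exp (κ * Real.cos t)) := by
    intro t
    have h2 : Real.cos t * Real.cos t = 1/2 + Real.cos (2*t)/2 := by
      rw [← pow_two]; simpa using Real.cos_sq t
    rw [h2]; ring
  rw [intervalIntegral.integral_congr (fun t _ => h1 t),
    intervalIntegral.integral_add
      ((Continuous.intervalIntegrable (by continuity) _ _))
      ((Continuous.intervalIntegrable (by continuity) _ _)),
    intervalIntegral.integral_const_mul, intervalIntegral.integral_const_mul]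
  unfold besselI0 besselI2
  ring

set_option maxHeartbeats 1000000 in
lemma besselVar_pos (κ : ℝ) :
    0 < besselI0 κ * ((besselI0 κ + besselI2 κ) / 2) - besselI1 κ ^ 2 := by
  have hwc : Continuous fun t => Real.exp (κ * Real.cos t) :=
    Real.continuous_exp.comp (continuous_const.mul Real.continuous_cos)
  have hc1 : Continuous fun t => Real.cos t * Real.exp (κ * Real.cos t) :=
    Real.continuous_cos.mul hwc
  have hc2 : Continuous fun t => Real.cos t * Real.cos t * Real.exp (κ * Real.cos t) :=
    (Real.continuous_cos.mul Real.continuous_cos).mul hwc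
  set A : ℝ := ∫ t in (0:ℝ)..(2*Real.pi), Real.exp (κ * Real.cos t) with hA
  set B : ℝ := ∫ t in (0:ℝ)..(2*Real.pi), Real.cos t * Real.exp (κ * Real.cos t) with hB
  set C : ℝ := ∫ t in (0:ℝ)..(2*Real.pi),
    Real.cos t * Real.cos t * Real.exp (κ * Real.cos t) with hC
  have e0 : besselI0 κ = (1/(2*Real.pi)) * A := rfl
  have e1 : besselI1 κ = (1/(2*Real.pi)) * B := rfl
  have e2 : (besselI0 κ + besselI2 κ) / 2 = (1/(2*Real.pi)) * C := (besselC κ).symm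
  have hApos : 0 < A := by
    rw [hA]
    exact intervalIntegral_pos_of_pos (hwc.intervalIntegrable _ _)
      (fun t => Real.exp_pos _) (by positivity)
  set m : ℝ := B / A with hm
  clear_value A B C
  have hfc : Continuous (fun t => Real.exp (κ * Real.cos t) * (Real.cos t - m)^2) :=
    hwc.mul ((Real.continuous_cos.sub continuous_const).pow 2)
  -- ∫ f = C - 2 m B + m² A
  have hInt : (∫ t in (0:ℝ)..(2*Real.pi), Real.exp (κ * Real.cos t) * (Real.cos t - m)^2)
      = C - (2*m) * B + m^2 * A := by
    have h1 : ∀ t : ℝ, Real.exp (κ * Real.cos t) * (Real.cos t - m)^2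
        = (Real.cos t * Real.cos t * Real.exp (κ * Real.cos t))
        - (2*m) * (Real.cos t * Real.exp (κ * Real.cos t))
        + m^2 * (Real.exp (κ * Real.cos t)) := by intro t; ring
    have i1 : IntervalIntegrable (fun t => Real.cos t * Real.cos t * Real.exp (κ * Real.cos t))
        volume 0 (2*Real.pi) := hc2.intervalIntegrable _ _
    have i2 : IntervalIntegrable (fun t => (2*m) * (Real.cos t * Real.exp (κ * Real.cos t)))
        volume 0 (2*Real.pi) := (continuous_const.mul hc1).intervalIntegrable _ _
    have i3 : IntervalIntegrable (fun t => m^2 * Real.exp (κ * Real.cos t))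
        volume 0 (2*Real.pi) := (continuous_const.mul hwc).intervalIntegrable _ _
    rw [intervalIntegral.integral_congr (fun t _ => h1 t),
      intervalIntegral.integral_add (i1.sub i2) i3, intervalIntegral.integral_sub i1 i2,
      intervalIntegral.integral_const_mul, intervalIntegral.integral_const_mul, ← hA, ← hB, ← hC]
  -- ∫ f > 0
  have hfpos : 0 < ∫ t in (0:ℝ)..(2*Real.pi),
      Real.exp (κ * Real.cos t) * (Real.cos t - m)^2 := by
    rw [intervalIntegral.integral_pos_iff_support_of_nonneg_ae
      (Filter.Eventually.of_forall (fun t => by positivity))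
      (hfc.intervalIntegrable _ _)]
    refine ⟨by positivity, ?_⟩
    obtain ⟨c, hc0, hc2pt, hfc0⟩ : ∃ c, 0 ≤ c ∧ c < 2*Real.pi ∧
        Real.exp (κ * Real.cos c) * (Real.cos c - m)^2 ≠ 0 := by
      by_cases hm1 : m = 1
      · refine ⟨Real.pi, Real.pi_pos.le, by linarith [Real.pi_pos], ?_⟩
        rw [Real.cos_pi, hm1]
        apply mul_ne_zero (Real.exp_ne_zero _) (pow_ne_zero _ (by norm_num))
      · refine ⟨0, le_refl _, by positivity, ?_⟩
        rw [Real.cos_zero]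
        exact mul_ne_zero (Real.exp_ne_zero _)
          (pow_ne_zero _ (sub_ne_zero.mpr (fun h => hm1 h.symm)))
    have hop : IsOpen (Function.support
        (fun t => Real.exp (κ * Real.cos t) * (Real.cos t - m)^2)) := hfc.isOpen_support
    obtain ⟨δ, hδpos, hball⟩ := Metric.isOpen_iff.mp hop c hfc0
    have hcu : c < min (c + δ) (2*Real.pi) := lt_min (by linarith) hc2pt
    calc (0 : ENNReal) < volume (Ioo c (min (c + δ) (2*Real.pi))) := by
          rw [Real.volume_Ioo]; simp [hcu]
      _ ≤ _ := by
          apply measure_mono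
          intro x hx
          refine ⟨hball ?_, ⟨lt_of_le_of_lt hc0 hx.1,
            le_trans hx.2.le (min_le_right _ _)⟩⟩
          rw [Metric.mem_ball, Real.dist_eq, abs_lt]
          constructor
          · linarith [hx.1]
          · have := lt_of_lt_of_le hx.2 (min_le_left _ _); linarith
  -- conclude
  have hintf : (∫ t in (0:ℝ)..(2*Real.pi),
      Real.exp (κ * Real.cos t) * (Real.cos t - m)^2) = C - B^2 / A := by
    rw [hInt, hm]; field_simp; ring
  have hACB : 0 < A * C - B^2 := by
    have h : A * C - B^2 = A * (C - B^2 / A) := by field_simp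
    rw [h, ← hintf]
    exact mul_pos hApos hfpos
  rw [e2, e0, e1]
  have hpi : (0:ℝ) < 1/(2*Real.pi) := by positivity
  nlinarith [mul_pos (mul_pos hpi hpi) hACB]

lemma hasDerivAt_main (κ : ℝ) :
    HasDerivAt (fun κ => κ * besselI1 κ / besselI0 κ - Real.log (besselI0 κ))
      (κ * ((besselI0 κ + besselI2 κ) / (2 * besselI0 κ)
        - (besselI1 κ)^2 / (besselI0 κ)^2)) κ := by
  have h0 := hasDerivAt_besselI0 κ
  have h1 := hasDerivAt_besselI1 κ
  have hpos := besselI0_pos κ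
  have hne := hpos.ne'
  have h2 : HasDerivAt (fun x => x * besselI1 x)
      (1 * besselI1 κ + κ * ((besselI0 κ + besselI2 κ)/2)) κ := (hasDerivAt_id κ).mul h1
  have h5 := (h2.div h0 hne).sub (h0.log hne)
  refine h5.congr_deriv ?_
  field_simp
  ring

lemma deriv_pos (κ : ℝ) (hκ : 0 < κ) :
    0 < κ * ((besselI0 κ + besselI2 κ) / (2 * besselI0 κ)
        - (besselI1 κ)^2 / (besselI0 κ)^2) := by
  have hpos := besselI0_pos κ
  apply mul_pos hκ
  have h : (besselI0 κ + besselI2 κ) / (2 * besselI0 κ) - (besselI1 κ)^2 / (besselI0 κ)^2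
      = (besselI0 κ * ((besselI0 κ + besselI2 κ)/2) - besselI1 κ^2) / (besselI0 κ)^2 := by
    field_simp
  rw [h]
  exact div_pos (besselVar_pos κ) (pow_pos hpos 2)

theorem vonMises_KLD_strictMono :
    StrictMonoOn (fun κ => κ * besselI1 κ / besselI0 κ - Real.log (besselI0 κ))
      (Set.Ioi (0:ℝ)) ∧
    ∀ κ ∈ Set.Ioi (0:ℝ),
      HasDerivAt (fun κ => κ * besselI1 κ / besselI0 κ - Real.log (besselI0 κ))
        (κ * ((besselI0 κ + besselI2 κ) / (2 * besselI0 κ)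
          - (besselI1 κ)^2 / (besselI0 κ)^2)) κ := by
  constructor
  · apply strictMonoOn_of_deriv_pos (convex_Ioi 0)
    · exact fun x _ => ((hasDerivAt_main x).continuousAt).continuousWithinAt
    · intro x hx
      rw [interior_Ioi] at hx
      rw [(hasDerivAt_main x).deriv]
      exact deriv_pos x hx
  · exact fun κ hκ => hasDerivAt_main κ
end

section
/- The function F(κ) = 1 − exp(−λ sqrt(κ I₁(κ)/I₀(κ) − log I₀(κ))) for λ > 0 is a cumulative distribution function on [0, ∞): F(0) = 0, F is monotone nondecreasing, and F(κ) → 1 as κ → ∞. -/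
open Real MeasureTheory Filter

open intervalIntegral

noncomputable def vmJ (κ : ℝ) : ℝ := ∫ t in (0:ℝ)..(2*π), Real.exp (κ * Real.cos t)
noncomputable def vmK (κ : ℝ) : ℝ := ∫ t in (0:ℝ)..(2*π), Real.cos t * Real.exp (κ * Real.cos t)
noncomputable def vmL (κ : ℝ) : ℝ := ∫ t in (0:ℝ)..(2*π), (Real.cos t)^2 * Real.exp (κ * Real.cos t)
noncomputable def vmD (κ : ℝ) : ℝ := κ * vmK κ / vmJ κ - Real.log (vmJ κ) + Real.log (2*π)

lemma aux_cont (n : ℕ) (x : ℝ) :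
    Continuous (fun t => (Real.cos t)^n * Real.exp (x * Real.cos t)) := by
  exact (Real.continuous_cos.pow n).mul
    (Real.continuous_exp.comp (continuous_const.mul Real.continuous_cos))

lemma vmJ_pos (κ : ℝ) : 0 < vmJ κ := by
  apply intervalIntegral.intervalIntegral_pos_of_pos (f := fun t => Real.exp (κ * Real.cos t))
  · exact (Real.continuous_exp.comp (continuous_const.mul Real.continuous_cos)).intervalIntegrable _ _
  · intro t; exact Real.exp_pos _
  · positivity

lemma vm_hasDerivAt (n : ℕ) (κ : ℝ) :
    HasDerivAt (fun x => ∫ t in (0:ℝ)..(2*π), (Real.cos t)^n * Real.exp (x * Real.cos t))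
      (∫ t in (0:ℝ)..(2*π), (Real.cos t)^(n+1) * Real.exp (κ * Real.cos t)) κ := by
  have := intervalIntegral.hasDerivAt_integral_of_dominated_loc_of_deriv_le
    (F := fun x t => (Real.cos t)^n * Real.exp (x * Real.cos t))
    (F' := fun x t => (Real.cos t)^(n+1) * Real.exp (x * Real.cos t))
    (x₀ := κ) (a := 0) (b := 2*π) (μ := volume)
    (bound := fun _ => Real.exp (|κ| + 1))
    (s := Metric.ball κ 1) (Metric.ball_mem_nhds κ one_pos)
    (Filter.Eventually.of_forall (fun x => ((aux_cont n x).aestronglyMeasurable)))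
    (((aux_cont n κ)).intervalIntegrable _ _)
    ((aux_cont (n+1) κ).aestronglyMeasurable)
    ?_ (intervalIntegrable_const) ?_
  · exact this.2
  · refine Filter.Eventually.of_forall (fun t _ x hx => ?_)
    have h1 : |Real.cos t| ≤ 1 := Real.abs_cos_le_one t
    have hxk : |x| ≤ |κ| + 1 := by
      have := Metric.mem_ball.1 hx
      rw [Real.dist_eq] at this
      calc |x| ≤ |x - κ| + |κ| := by simpa using abs_add_le (x - κ) κ
        _ ≤ |κ| + 1 := by linarith [this.le]
    calc ‖(Real.cos t)^(n+1) * Real.exp (x * Real.cos t)‖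
        = |Real.cos t|^(n+1) * Real.exp (x * Real.cos t) := by
          rw [norm_eq_abs, abs_mul, abs_pow, Real.abs_exp]
      _ ≤ 1 * Real.exp (|κ| + 1) := by
          apply mul_le_mul (pow_le_one₀ (abs_nonneg _) h1) (Real.exp_le_exp.2 ?_)
            (Real.exp_pos _).le one_pos.le
          calc x * Real.cos t ≤ |x * Real.cos t| := le_abs_self _
            _ ≤ |x| * 1 := by rw [abs_mul]; exact mul_le_mul_of_nonneg_left h1 (abs_nonneg _)
            _ ≤ |κ| + 1 := by simpa using hxk
      _ = Real.exp (|κ| + 1) := one_mul _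
  · refine Filter.Eventually.of_forall (fun t _ x hx => ?_)
    have h : HasDerivAt (fun x : ℝ => x * Real.cos t) (Real.cos t) x := by
      simpa using (hasDerivAt_id x).mul_const (Real.cos t)
    have := (h.exp).const_mul ((Real.cos t)^n)
    refine this.congr_deriv ?_
    ring

lemma vmJ_deriv (κ : ℝ) : HasDerivAt vmJ (vmK κ) κ := by
  have := vm_hasDerivAt 0 κ
  simp at this; exact this

lemma vmK_deriv (κ : ℝ) : HasDerivAt vmK (vmL κ) κ := by
  have := vm_hasDerivAt 1 κ
  simp at this; exact this

lemma vm_cs (κ : ℝ) : vmK κ ^ 2 ≤ vmL κ * vmJ κ := by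
  set c := vmK κ / vmJ κ with hc
  have hJ := vmJ_pos κ
  have h0 : (0:ℝ) ≤ ∫ t in (0:ℝ)..(2*π), (Real.cos t - c)^2 * Real.exp (κ * Real.cos t) := by
    apply intervalIntegral.integral_nonneg (by positivity)
    intro t _; positivity
  have hexp : (fun t => (Real.cos t - c)^2 * Real.exp (κ * Real.cos t))
      = fun t => (Real.cos t)^2 * Real.exp (κ * Real.cos t)
        - (2*c) * (Real.cos t * Real.exp (κ * Real.cos t))
        + c^2 * Real.exp (κ * Real.cos t) := by
    funext t; ring
  have hc0 : Continuous fun t : ℝ => Real.exp (κ * Real.cos t) :=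
    Real.continuous_exp.comp (continuous_const.mul Real.continuous_cos)
  have hc1 : Continuous fun t : ℝ => Real.cos t * Real.exp (κ * Real.cos t) :=
    Real.continuous_cos.mul hc0
  have hc2 : Continuous fun t : ℝ => (Real.cos t)^2 * Real.exp (κ * Real.cos t) :=
    (Real.continuous_cos.pow 2).mul hc0
  rw [hexp] at h0
  rw [intervalIntegral.integral_add (f := fun t => (Real.cos t)^2 * Real.exp (κ * Real.cos t)
          - (2*c) * (Real.cos t * Real.exp (κ * Real.cos t)))
      (g := fun t => c^2 * Real.exp (κ * Real.cos t)) (((hc2.sub (continuous_const.mul hc1))).intervalIntegrable _ _)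
      ((continuous_const.mul hc0).intervalIntegrable _ _),
    intervalIntegral.integral_sub (g := fun t => (2*c) * (Real.cos t * Real.exp (κ * Real.cos t)))
        (hc2.intervalIntegrable _ _)
      ((continuous_const.mul hc1).intervalIntegrable _ _),
    intervalIntegral.integral_const_mul, intervalIntegral.integral_const_mul] at h0
  have h0' : 0 ≤ vmL κ - 2*c*vmK κ + c^2 * vmJ κ := h0
  have : c * vmJ κ = vmK κ := by rw [hc]; field_simp
  nlinarith [h0', sq_nonneg c]

lemma vmD_hasDerivAt (κ : ℝ) :
    HasDerivAt vmD (κ * (vmL κ * vmJ κ - vmK κ^2) / vmJ κ^2) κ := by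
  have hJ := vmJ_pos κ
  have h1 : HasDerivAt (fun x => x * vmK x) (1 * vmK κ + κ * vmL κ) κ :=
    (hasDerivAt_id κ).mul (vmK_deriv κ)
  have h2 := h1.div (vmJ_deriv κ) hJ.ne'
  have h3 : HasDerivAt (fun x => Real.log (vmJ x)) (vmK κ / vmJ κ) κ :=
    (vmJ_deriv κ).log hJ.ne'
  have h4 := (h2.sub h3).add_const (Real.log (2*π))
  have : vmD = fun x => x * vmK x / vmJ x - Real.log (vmJ x) + Real.log (2*π) := rfl
  rw [this]
  refine h4.congr_deriv ?_
  field_simp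
  ring

lemma vmD_mono : MonotoneOn vmD (Set.Ici 0) := by
  apply monotoneOn_of_deriv_nonneg (convex_Ici 0)
  · exact fun x _ => (vmD_hasDerivAt x).continuousAt.continuousWithinAt
  · exact fun x _ => (vmD_hasDerivAt x).differentiableAt.differentiableWithinAt
  · intro x hx
    rw [interior_Ici] at hx
    rw [(vmD_hasDerivAt x).deriv]
    have h1 := vm_cs x
    have hJ := vmJ_pos x
    apply div_nonneg (mul_nonneg (le_of_lt hx) (by linarith)) (sq_nonneg _)

lemma vmJ_zero : vmJ 0 = 2*π := by
  simp [vmJ]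

lemma vmD_zero : vmD 0 = 0 := by
  simp [vmD, vmJ_zero]

lemma vm_shift (g : ℝ → ℝ) :
    (∫ t in (0:ℝ)..(2*π), g (Real.cos t)) = ∫ t in (-π)..π, g (Real.cos t) := by
  have hper : Function.Periodic (fun t => g (Real.cos t)) (2*π) := Real.cos_periodic.comp g
  have h := hper.intervalIntegral_add_eq 0 (-π)
  have h2 : -π + 2*π = π := by ring
  rw [zero_add, h2] at h
  exact h

lemma gauss_bound {b : ℝ} (hb : 0 < b) :
    ∫ t in (-π)..π, Real.exp (-b * t^2) ≤ Real.sqrt (π/b) := by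
  rw [intervalIntegral.integral_of_le (by linarith [Real.pi_pos])]
  calc (∫ t in Set.Ioc (-π) π, Real.exp (-b*t^2))
      ≤ ∫ t : ℝ, Real.exp (-b*t^2) :=
        setIntegral_le_integral (integrable_exp_neg_mul_sq hb)
          (Filter.Eventually.of_forall fun t => (Real.exp_pos _).le)
    _ = Real.sqrt (π/b) := integral_gaussian b

lemma vmJ_upper {κ : ℝ} (hκ : 0 < κ) :
    vmJ κ ≤ Real.exp κ * Real.sqrt (π^3/(2*κ)) := by
  have hπ := Real.pi_pos
  have hb : 0 < 2*κ/π^2 := by positivity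
  have hshift : vmJ κ = ∫ t in (-π)..π, Real.exp (κ * Real.cos t) :=
    vm_shift (fun y => Real.exp (κ * y))
  have hcont1 : Continuous fun t : ℝ => Real.exp (κ * Real.cos t) :=
    Real.continuous_exp.comp (continuous_const.mul Real.continuous_cos)
  have hcont2 : Continuous fun t : ℝ => Real.exp κ * Real.exp (-(2*κ/π^2) * t^2) :=
    continuous_const.mul (Real.continuous_exp.comp (by continuity))
  have hmono : (∫ t in (-π)..π, Real.exp (κ * Real.cos t))
      ≤ ∫ t in (-π)..π, Real.exp κ * Real.exp (-(2*κ/π^2) * t^2) := by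
    apply intervalIntegral.integral_mono_on (by linarith)
      (hcont1.intervalIntegrable _ _) (hcont2.intervalIntegrable _ _)
    intro t ht
    rw [← Real.exp_add]
    apply Real.exp_le_exp.2
    have habs : |t| ≤ π := abs_le.2 ⟨ht.1, ht.2⟩
    have hcos := Real.cos_le_one_sub_mul_cos_sq habs
    have h2 : κ * Real.cos t ≤ κ * (1 - 2/π^2 * t^2) :=
      mul_le_mul_of_nonneg_left hcos hκ.le
    have h3 : κ * (1 - 2/π^2 * t^2) = κ + -(2*κ/π^2) * t^2 := by ring
    linarith [h2, h3.le]
  rw [hshift]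
  calc (∫ t in (-π)..π, Real.exp (κ * Real.cos t))
      ≤ ∫ t in (-π)..π, Real.exp κ * Real.exp (-(2*κ/π^2) * t^2) := hmono
    _ = Real.exp κ * ∫ t in (-π)..π, Real.exp (-(2*κ/π^2) * t^2) :=
        intervalIntegral.integral_const_mul _ _
    _ ≤ Real.exp κ * Real.sqrt (π/(2*κ/π^2)) :=
        mul_le_mul_of_nonneg_left (gauss_bound hb) (Real.exp_pos _).le
    _ = Real.exp κ * Real.sqrt (π^3/(2*κ)) := by
        congr 1
        rw [div_div_eq_mul_div]
        ring_nf

lemma vmJ_lower {κ : ℝ} (hκ : 1 ≤ κ) :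
    Real.exp (κ - 1/2) / Real.sqrt κ ≤ vmJ κ := by
  have hκ0 : 0 < κ := by linarith
  have hπ := Real.pi_gt_three
  have hs : 0 < Real.sqrt κ := Real.sqrt_pos.2 hκ0
  set a := (Real.sqrt κ)⁻¹ with ha_def
  have ha : 0 < a := by positivity
  have hs1 : 1 ≤ Real.sqrt κ := by
    rw [show (1:ℝ) = Real.sqrt 1 by simp]; exact Real.sqrt_le_sqrt hκ
  have ha1 : a ≤ 1 := inv_le_one_of_one_le₀ hs1
  have ha2 : a^2 = 1/κ := by
    rw [ha_def, ← one_div, div_pow, one_pow, Real.sq_sqrt hκ0.le]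
  have ha2π : a ≤ 2*π := by linarith
  have hcont : Continuous fun t : ℝ => Real.exp (κ * Real.cos t) :=
    Real.continuous_exp.comp (continuous_const.mul Real.continuous_cos)
  have hsplit : vmJ κ = (∫ t in (0:ℝ)..a, Real.exp (κ * Real.cos t))
      + ∫ t in a..(2*π), Real.exp (κ * Real.cos t) :=
    (intervalIntegral.integral_add_adjacent_intervals
      (hcont.intervalIntegrable _ _) (hcont.intervalIntegrable _ _)).symm
  have h2 : 0 ≤ ∫ t in a..(2*π), Real.exp (κ * Real.cos t) :=
    intervalIntegral.integral_nonneg ha2π fun t _ => (Real.exp_pos _).le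
  have h3 : a * Real.exp (κ - 1/2) ≤ ∫ t in (0:ℝ)..a, Real.exp (κ * Real.cos t) := by
    have : (∫ t in (0:ℝ)..a, Real.exp (κ - 1/2))
        ≤ ∫ t in (0:ℝ)..a, Real.exp (κ * Real.cos t) := by
      apply intervalIntegral.integral_mono_on ha.le
        (intervalIntegrable_const) (hcont.intervalIntegrable _ _)
      intro t ht
      apply Real.exp_le_exp.2
      have hcos := Real.one_sub_sq_div_two_le_cos (x := t)
      have ht2 : t^2 ≤ a^2 := by nlinarith [ht.1, ht.2]
      have hta : t^2 ≤ 1/κ := ha2 ▸ ht2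
      have hmc : κ * (1 - t^2/2) ≤ κ * Real.cos t :=
        mul_le_mul_of_nonneg_left hcos hκ0.le
      have h4 : κ * t^2 ≤ 1 := by
        have h5 := mul_le_mul_of_nonneg_left hta hκ0.le
        have h6 : κ * (1/κ) = 1 := by field_simp
        linarith
      nlinarith [hmc, h4]
    rw [intervalIntegral.integral_const, smul_eq_mul, sub_zero] at this
    exact this
  have haeq : a * Real.exp (κ - 1/2) = Real.exp (κ - 1/2) / Real.sqrt κ := by
    rw [ha_def]; field_simp
  rw [hsplit]
  linarith [haeq ▸ h3]

lemma y_exp_bound (y : ℝ) : y * Real.exp (-y) ≤ Real.exp (-1 : ℝ) := by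
  have h := Real.add_one_le_exp (y - 1)
  have h2 : y ≤ Real.exp y * Real.exp (-1:ℝ) := by
    rw [← Real.exp_add]; linarith [Real.add_one_le_exp (y + (-1:ℝ))]
  calc y * Real.exp (-y) ≤ (Real.exp y * Real.exp (-1)) * Real.exp (-y) :=
        mul_le_mul_of_nonneg_right h2 (Real.exp_pos _).le
    _ = Real.exp (-1:ℝ) := by rw [← Real.exp_add, ← Real.exp_add]; ring_nf

lemma pointwise_JK {κ t : ℝ} (hκ : 1 ≤ κ) (habs : |t| ≤ π) :
    (1 - Real.cos t) * Real.exp (κ * Real.cos t)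
      ≤ 2/(Real.exp 1 * κ) * Real.exp κ * Real.exp (-(κ/π^2) * t^2) := by
  have hκ0 : 0 < κ := by linarith
  have hπ := Real.pi_pos
  set u := 1 - Real.cos t with hu_def
  have hu0 : 0 ≤ u := by simp [hu_def]; exact Real.cos_le_one t
  have hut : (2/π^2) * t^2 ≤ u := by
    have := Real.cos_le_one_sub_mul_cos_sq habs
    simp only [hu_def]; linarith
  have hexp : Real.exp (κ * Real.cos t) = Real.exp κ * Real.exp (-(κ*u)) := by
    rw [← Real.exp_add]; congr 1; rw [hu_def]; ring
  have hstepB : u * Real.exp (-(κ*u)) ≤ 2/(Real.exp 1 * κ) * Real.exp (-(κ*u/2)) := by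
    have hy := y_exp_bound (κ*u/2)
    have key : u * Real.exp (-(κ*u)) =
        (2/κ) * ((κ*u/2) * Real.exp (-(κ*u/2))) * Real.exp (-(κ*u/2)) := by
      rw [show -(κ*u) = -(κ*u/2) + -(κ*u/2) by ring, Real.exp_add]
      field_simp
    rw [key]
    have : (2/κ) * ((κ*u/2) * Real.exp (-(κ*u/2))) ≤ (2/κ) * Real.exp (-1:ℝ) :=
      mul_le_mul_of_nonneg_left hy (by positivity)
    calc (2/κ) * ((κ*u/2) * Real.exp (-(κ*u/2))) * Real.exp (-(κ*u/2))
        ≤ (2/κ) * Real.exp (-1:ℝ) * Real.exp (-(κ*u/2)) :=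
          mul_le_mul_of_nonneg_right this (Real.exp_pos _).le
      _ = 2/(Real.exp 1 * κ) * Real.exp (-(κ*u/2)) := by
          rw [Real.exp_neg]
          field_simp
  have hstepC : Real.exp (-(κ*u/2)) ≤ Real.exp (-(κ/π^2) * t^2) := by
    apply Real.exp_le_exp.2
    have : (κ/π^2) * t^2 ≤ κ*u/2 := by
      have := mul_le_mul_of_nonneg_left hut (by positivity : (0:ℝ) ≤ κ/2)
      calc (κ/π^2) * t^2 = (κ/2) * ((2/π^2) * t^2) := by ring
        _ ≤ (κ/2) * u := this
        _ = κ*u/2 := by ring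
    linarith
  calc (1 - Real.cos t) * Real.exp (κ * Real.cos t)
      = Real.exp κ * (u * Real.exp (-(κ*u))) := by rw [hexp, hu_def]; ring
    _ ≤ Real.exp κ * (2/(Real.exp 1 * κ) * Real.exp (-(κ*u/2))) :=
        mul_le_mul_of_nonneg_left hstepB (Real.exp_pos _).le
    _ ≤ Real.exp κ * (2/(Real.exp 1 * κ) * Real.exp (-(κ/π^2) * t^2)) := by
        apply mul_le_mul_of_nonneg_left _ (Real.exp_pos _).le
        exact mul_le_mul_of_nonneg_left hstepC (by positivity)
    _ = 2/(Real.exp 1 * κ) * Real.exp κ * Real.exp (-(κ/π^2) * t^2) := by ring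

lemma vmJK_upper {κ : ℝ} (hκ : 1 ≤ κ) :
    vmJ κ - vmK κ ≤ 2/(Real.exp 1 * κ) * Real.exp κ * Real.sqrt (π^3/κ) := by
  have hκ0 : 0 < κ := by linarith
  have hπ := Real.pi_pos
  have hb : 0 < κ/π^2 := by positivity
  have hcont0 : Continuous fun t : ℝ => Real.exp (κ * Real.cos t) :=
    Real.continuous_exp.comp (continuous_const.mul Real.continuous_cos)
  have hcont1 : Continuous fun t : ℝ => Real.cos t * Real.exp (κ * Real.cos t) :=
    Real.continuous_cos.mul hcont0
  have hcont2 : Continuous fun t : ℝ => (1 - Real.cos t) * Real.exp (κ * Real.cos t) :=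
    (continuous_const.sub Real.continuous_cos).mul hcont0
  have hcont3 : Continuous fun t : ℝ =>
      2/(Real.exp 1 * κ) * Real.exp κ * Real.exp (-(κ/π^2) * t^2) :=
    continuous_const.mul (Real.continuous_exp.comp (by continuity))
  have hsub : vmJ κ - vmK κ
      = ∫ t in (0:ℝ)..(2*π), (1 - Real.cos t) * Real.exp (κ * Real.cos t) := by
    rw [vmJ, vmK, ← intervalIntegral.integral_sub (hcont0.intervalIntegrable _ _)
      (hcont1.intervalIntegrable _ _)]
    congr 1; funext t; ring
  have hshift : (∫ t in (0:ℝ)..(2*π), (1 - Real.cos t) * Real.exp (κ * Real.cos t))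
      = ∫ t in (-π)..π, (1 - Real.cos t) * Real.exp (κ * Real.cos t) :=
    vm_shift (fun y => (1 - y) * Real.exp (κ * y))
  rw [hsub, hshift]
  calc (∫ t in (-π)..π, (1 - Real.cos t) * Real.exp (κ * Real.cos t))
      ≤ ∫ t in (-π)..π, 2/(Real.exp 1 * κ) * Real.exp κ * Real.exp (-(κ/π^2) * t^2) := by
        apply intervalIntegral.integral_mono_on (by linarith)
          (hcont2.intervalIntegrable _ _) (hcont3.intervalIntegrable _ _)
        intro t ht
        exact pointwise_JK hκ (abs_le.2 ⟨ht.1, ht.2⟩)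
    _ = 2/(Real.exp 1 * κ) * Real.exp κ * ∫ t in (-π)..π, Real.exp (-(κ/π^2) * t^2) :=
        intervalIntegral.integral_const_mul _ _
    _ ≤ 2/(Real.exp 1 * κ) * Real.exp κ * Real.sqrt (π/(κ/π^2)) := by
        apply mul_le_mul_of_nonneg_left (gauss_bound hb) (by positivity)
    _ = 2/(Real.exp 1 * κ) * Real.exp κ * Real.sqrt (π^3/κ) := by
        congr 2
        rw [div_div_eq_mul_div]
        ring_nf

lemma vmD_lower {κ : ℝ} (hκ : 1 ≤ κ) :
    (1/2) * Real.log κ - (2 * Real.sqrt (π^3) * Real.exp (1/2) / Real.exp 1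
      + (1/2) * Real.log (π^3/2) - Real.log (2*π)) ≤ vmD κ := by
  have hκ0 : 0 < κ := by linarith
  have hπ := Real.pi_pos
  have hJ := vmJ_pos κ
  have hJlow := vmJ_lower hκ
  have hJup := vmJ_upper hκ0
  have hJK := vmJK_upper hκ
  have hs : 0 < Real.sqrt κ := Real.sqrt_pos.2 hκ0
  -- bound on κ * (vmJ - vmK) / vmJ
  have hratio : κ * (vmJ κ - vmK κ) / vmJ κ
      ≤ 2 * Real.sqrt (π^3) * Real.exp (1/2) / Real.exp 1 := by
    rcases le_or_gt (vmJ κ - vmK κ) 0 with h | h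
    · have : κ * (vmJ κ - vmK κ) / vmJ κ ≤ 0 := by
        apply div_nonpos_of_nonpos_of_nonneg _ hJ.le
        exact mul_nonpos_of_nonneg_of_nonpos hκ0.le h
      have hpos : 0 ≤ 2 * Real.sqrt (π^3) * Real.exp (1/2) / Real.exp 1 := by positivity
      linarith
    · have h1 : κ * (vmJ κ - vmK κ) ≤ κ * (2/(Real.exp 1 * κ) * Real.exp κ * Real.sqrt (π^3/κ)) :=
        mul_le_mul_of_nonneg_left hJK hκ0.le
      have h2 : κ * (2/(Real.exp 1 * κ) * Real.exp κ * Real.sqrt (π^3/κ))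
          = 2/Real.exp 1 * Real.exp κ * (Real.sqrt (π^3) / Real.sqrt κ) := by
        rw [Real.sqrt_div' _ ?pos]
        · field_simp
        case pos => positivity
      have hX : (0:ℝ) ≤ 2/Real.exp 1 * Real.exp κ * (Real.sqrt (π^3) / Real.sqrt κ) := by
        positivity
      have hLpos : 0 < Real.exp (κ - 1/2) / Real.sqrt κ := by positivity
      have h4 : κ * (vmJ κ - vmK κ) / vmJ κ
          ≤ 2/Real.exp 1 * Real.exp κ * (Real.sqrt (π^3) / Real.sqrt κ)
            / (Real.exp (κ - 1/2) / Real.sqrt κ) :=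
        div_le_div₀ hX (h1.trans h2.le) hLpos hJlow
      have h5 : 2/Real.exp 1 * Real.exp κ * (Real.sqrt (π^3) / Real.sqrt κ)
            / (Real.exp (κ - 1/2) / Real.sqrt κ)
          = 2 * Real.sqrt (π^3) * Real.exp (1/2) / Real.exp 1 := by
        rw [show Real.exp κ = Real.exp (κ - 1/2) * Real.exp (1/2) by
          rw [← Real.exp_add]; ring_nf]
        field_simp
      linarith
  -- assemble
  have hid : κ * vmK κ / vmJ κ = κ - κ * (vmJ κ - vmK κ) / vmJ κ := by
    field_simp
    ring
  have hlog : Real.log (vmJ κ) ≤ κ + (1/2) * (Real.log (π^3/2) - Real.log κ) := by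
    calc Real.log (vmJ κ) ≤ Real.log (Real.exp κ * Real.sqrt (π^3/(2*κ))) :=
          Real.log_le_log hJ hJup
      _ = κ + (1/2) * (Real.log (π^3/2) - Real.log κ) := by
          rw [Real.log_mul (Real.exp_ne_zero _) (by positivity), Real.log_exp,
            Real.log_sqrt (by positivity),
            show π^3/(2*κ) = (π^3/2)/κ by ring,
            Real.log_div (by positivity) hκ0.ne']
          ring
  rw [vmD, hid]
  linarith

lemma vmD_tendsto : Tendsto vmD atTop atTop := by
  set C := 2 * Real.sqrt (π^3) * Real.exp (1/2) / Real.exp 1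
      + (1/2) * Real.log (π^3/2) - Real.log (2*π) with hC
  have hbase : Tendsto (fun κ : ℝ => (1/2) * Real.log κ - C) atTop atTop := by
    apply tendsto_atTop_add_const_right
    exact Real.tendsto_log_atTop.const_mul_atTop (by norm_num)
  apply tendsto_atTop_mono' atTop ?_ hbase
  filter_upwards [eventually_ge_atTop (1:ℝ)] with κ hκ
  exact vmD_lower hκ

lemma bessel_eq (κ : ℝ) :
    κ * besselI1 κ / besselI0 κ - Real.log (besselI0 κ) = vmD κ := by
  have hJ := vmJ_pos κ
  have h2π : (0:ℝ) < 2*π := by positivity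
  have h0 : besselI0 κ = vmJ κ / (2*π) := by rw [besselI0]; unfold vmJ; ring
  have h1 : besselI1 κ = vmK κ / (2*π) := by rw [besselI1]; unfold vmK; ring
  rw [h0, h1, vmD, Real.log_div hJ.ne' h2π.ne']
  have hd : κ * (vmK κ / (2*π)) / (vmJ κ / (2*π)) = κ * vmK κ / vmJ κ := by
    field_simp
  rw [hd]
  ring

theorem pc_prior_vm_uniform_cdf (lam : ℝ) (hlam : 0 < lam) :
    let F : ℝ → ℝ := fun κ =>
      1 - Real.exp (-lam * Real.sqrt (κ * besselI1 κ / besselI0 κ - Real.log (besselI0 κ)))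
    F 0 = 0 ∧ MonotoneOn F (Set.Ici (0:ℝ)) ∧ Tendsto F atTop (nhds 1) := by
  intro F
  have hF : ∀ κ, F κ = 1 - Real.exp (-lam * Real.sqrt (vmD κ)) := by
    intro κ; simp only [F, bessel_eq]
  refine ⟨?_, ?_, ?_⟩
  · rw [hF 0, vmD_zero]; simp
  · intro a ha b hb hab
    rw [hF a, hF b]
    have hd := vmD_mono ha hb hab
    have hsq : Real.sqrt (vmD a) ≤ Real.sqrt (vmD b) := Real.sqrt_le_sqrt hd
    have h1 : lam * Real.sqrt (vmD a) ≤ lam * Real.sqrt (vmD b) :=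
      mul_le_mul_of_nonneg_left hsq hlam.le
    have h2 : Real.exp (-lam * Real.sqrt (vmD b)) ≤ Real.exp (-lam * Real.sqrt (vmD a)) := by
      apply Real.exp_le_exp.2; linarith
    linarith
  · have hsqrt : Tendsto Real.sqrt atTop atTop := by
      have := tendsto_rpow_atTop (y := (1/2:ℝ)) (by norm_num)
      refine this.congr' ?_
      filter_upwards with x
      rw [Real.sqrt_eq_rpow]
    have h1 : Tendsto (fun κ => Real.sqrt (vmD κ)) atTop atTop := hsqrt.comp vmD_tendsto
    have h2 : Tendsto (fun κ => -lam * Real.sqrt (vmD κ)) atTop atBot :=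
      h1.const_mul_atTop_of_neg (by linarith)
    have h3 : Tendsto (fun κ => Real.exp (-lam * Real.sqrt (vmD κ))) atTop (nhds 0) :=
      Real.tendsto_exp_atBot.comp h2
    have h4 : Tendsto (fun κ => 1 - Real.exp (-lam * Real.sqrt (vmD κ))) atTop (nhds (1 - 0)) :=
      tendsto_const_nhds.sub h3
    rw [sub_zero] at h4
    exact h4.congr (fun κ => (hF κ).symm)
end
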